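/- (Theorem 2.) Let X be uniform on {0,1}, let L and S be finite sets with conditional pmfs satisfying P_L(l|x) > 0 and P_S(s|x) > 0 for all l, s, x, let d_v ≥ 1, and take φ_v = φ_v* and φ_ch = φ_ch*. Let B = {b_1, …, b_{|B|}} be the set of distinct values of Φ_v on L × S^{d_v−1}, labelled so that b_1 > b_2 > ⋯ > b_{|B|}, and let R be a finite output alphabet. Assume the following fact about finite binary-input channels: for every finite set Y with conditional pmf P_{Y|X} and every enumeration y_1,…,y_N of Y satisfying P_{Y|X}(y_i|0)·P_{Y|X}(y_{i+1}|1) ≥ P_{Y|X}(y_{i+1}|0)·P_{Y|X}(y_i|1) for all i and in which elements with equal likelihood ratio are consecutive, the maximum of I(X; f(Y)) over all functions f : Y → R is attained by a quantizer that is sequential with respect to this enumeration and constant on each class of equal likelihood ratio. Then the maximum of I(X; f(L, S_1,…,S_{d_v−1})) over all functions f : L × S^{d_v−1} → R, where (L, S_1,…,S_{d_v−1}) has the variable-node joint conditional pmf given X, is attained by a function of the form Λ ∘ Φ_v, where Λ : B → R maps b_i to r exactly when λ_r < i ≤ λ_{r+1} for some integers 0 = λ_0 ≤ λ_1 ≤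 ⋯ ≤ λ_{|R|} = |B|. -/

import Mathlib

open scoped BigOperators Classical

/-- Variable-node joint conditional pmf: `P(l, s | x) = P_L(l|x) · Π_i P_S(s_i|x)`. -/
noncomputable def varPmf {L S : Type*} (PL : L → ZMod 2 → ℝ) (PS : S → ZMod 2 → ℝ)
    {d : ℕ} (l : L) (s : Fin d → S) (x : ZMod 2) : ℝ :=
  PL l x * ∏ i, PS (s i) x

/-- Combined variable-node value: `Φ_v(l, s) = φ_ch(l) + Σ_i φ_v(s_i)`. -/
noncomputable def PhiV {L S : Type*} (φv : S → ℝ) (φch : L → ℝ)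
    {d : ℕ} (l : L) (s : Fin d → S) : ℝ :=
  φch l + ∑ i, φv (s i)

/-- Optimal variable-node reconstruction function `φ_v*(s) = log(P_S(s|0)/P_S(s|1))`. -/
noncomputable def phiVStar {S : Type*} (PS : S → ZMod 2 → ℝ) (s : S) : ℝ :=
  Real.log (PS s 0 / PS s 1)

/-- Optimal channel reconstruction function `φ_ch*(l) = log(P_L(l|0)/P_L(l|1))`. -/
noncomputable def phiChStar {L : Type*} (PL : L → ZMod 2 → ℝ) (l : L) : ℝ :=
  Real.log (PL l 0 / PL l 1)

/-- Joint pmf of `(X, f(Y))` where `X` is uniform on `{0,1}` and `Y` has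
conditional pmf `W` given `X`: `p(x, z) = (1/2)·Σ_{y : f(y) = z} W(y|x)`. -/
noncomputable def jointPmf {Y Z : Type*} [Fintype Y] (W : Y → ZMod 2 → ℝ)
    (f : Y → Z) (x : ZMod 2) (z : Z) : ℝ :=
  (1 / 2 : ℝ) * ∑ y ∈ Finset.univ.filter (fun y => f y = z), W y x

/-- Mutual information `I(X; f(Y))` for `X` uniform on `{0,1}` and `Y` with
conditional pmf `W` given `X`; terms with zero joint probability are `0`. -/
noncomputable def mutualInfo {Y Z : Type*} [Fintype Y] [Fintype Z]
    (W : Y → ZMod 2 → ℝ) (f : Y → Z) : ℝ :=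
  ∑ x : ZMod 2, ∑ z : Z,
    if jointPmf W f x z = 0 then 0
    else jointPmf W f x z *
      Real.log (jointPmf W f x z /
        ((1 / 2 : ℝ) * ∑ x' : ZMod 2, jointPmf W f x' z))

lemma jointPmf_equiv {Y Y' Z : Type*} [Fintype Y] [Fintype Y'] (e : Y' ≃ Y)
    (W : Y → ZMod 2 → ℝ) (f : Y → Z) (x : ZMod 2) (z : Z) :
    jointPmf (fun y' => W (e y')) (fun y' => f (e y')) x z = jointPmf W f x z := by
  unfold jointPmf
  congr 1
  exact Finset.sum_equiv e (by simp) (by simp)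

lemma mutualInfo_equiv {Y Y' Z : Type*} [Fintype Y] [Fintype Y'] [Fintype Z] (e : Y' ≃ Y)
    (W : Y → ZMod 2 → ℝ) (f : Y → Z) :
    mutualInfo (fun y' => W (e y')) (fun y' => f (e y')) = mutualInfo W f := by
  unfold mutualInfo
  simp only [jointPmf_equiv]

/-- Theorem 2: with `φ_v = φ_v*` and `φ_ch = φ_ch*`, the maximum of
`I(X; f(L, S_1,…,S_{d_v−1}))` over all `f : L × S^{d_v−1} → R` (with
`R = {0,…,M−1}`) is attained by a function of the form `Λ ∘ Φ_v`, where `Λ` is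
a sequential (threshold) quantizer with respect to the decreasing ordering
`b_1 > b_2 > ⋯ > b_{|B|}` of the values of `Φ_v`. The hypothesis `hfact` is
the assumed fact about optimal sequential quantization of finite binary-input
channels whose outputs are enumerated in decreasing likelihood-ratio order
with equal-ratio elements consecutive. -/
theorem stmt_10 {L S : Type*} [Fintype L] [Fintype S] [Nonempty L] [Nonempty S]
    (PL : L → ZMod 2 → ℝ) (PS : S → ZMod 2 → ℝ)
    (hL : ∀ l x, 0 < PL l x) (hS : ∀ s x, 0 < PS s x)
    (hL1 : ∀ x, ∑ l : L, PL l x = 1) (hS1 : ∀ x, ∑ s : S, PS s x = 1)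
    (dv : ℕ) (hdv : 1 ≤ dv)
    (M : ℕ) (hM : 1 ≤ M)
    (hfact : ∀ (N : ℕ) (W : Fin N → ZMod 2 → ℝ),
      (∀ y x, 0 ≤ W y x) → (∀ x, ∑ y : Fin N, W y x = 1) →
      -- the enumeration is sorted by decreasing likelihood ratio
      (∀ (i : ℕ) (h : i + 1 < N),
        W ⟨i, Nat.lt_of_succ_lt h⟩ 0 * W ⟨i + 1, h⟩ 1 ≥
          W ⟨i + 1, h⟩ 0 * W ⟨i, Nat.lt_of_succ_lt h⟩ 1) →
      -- elements with equal likelihood ratio are consecutive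
      (∀ i j k : Fin N, i ≤ j → j ≤ k →
        W i 0 * W k 1 = W k 0 * W i 1 → W i 0 * W j 1 = W j 0 * W i 1) →
      ∃ Q : Fin N → Fin M, Monotone Q ∧
        (∀ i j : Fin N, W i 0 * W j 1 = W j 0 * W i 1 → Q i = Q j) ∧
        ∀ f : Fin N → Fin M, mutualInfo W f ≤ mutualInfo W Q) :
    ∃ Λ : ℝ → Fin M,
      -- `Λ` is sequential w.r.t. the labelling `b_1 > b_2 > ⋯ > b_{|B|}` of the
      -- distinct values of `Φ_v` on `L × S^{d_v−1}`
      (∀ a b : ℝ,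
        (∃ (l : L) (s : Fin (dv - 1) → S), PhiV (phiVStar PS) (phiChStar PL) l s = a) →
        (∃ (l : L) (s : Fin (dv - 1) → S), PhiV (phiVStar PS) (phiChStar PL) l s = b) →
        a > b → Λ a ≤ Λ b) ∧
      -- and `Λ ∘ Φ_v` attains the maximal mutual information
      ∀ f : L × (Fin (dv - 1) → S) → Fin M,
        mutualInfo (fun p : L × (Fin (dv - 1) → S) => varPmf PL PS p.1 p.2) f ≤
          mutualInfo (fun p : L × (Fin (dv - 1) → S) => varPmf PL PS p.1 p.2)
            (fun p => Λ (PhiV (phiVStar PS) (phiChStar PL) p.1 p.2)) := by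
  classical
  set Y := L × (Fin (dv - 1) → S) with hYdef
  let Φ : Y → ℝ := fun p => PhiV (phiVStar PS) (phiChStar PL) p.1 p.2
  let W : Y → ZMod 2 → ℝ := fun p => varPmf PL PS p.1 p.2
  have Wpos : ∀ (y : Y) x, 0 < W y x := fun y x =>
    mul_pos (hL _ _) (Finset.prod_pos fun i _ => hS _ _)
  have Wsum : ∀ x, ∑ y : Y, W y x = 1 := by
    intro x
    have hSsum : ∑ s : Fin (dv - 1) → S, ∏ i, PS (s i) x = 1 := by
      rw [← Fintype.prod_sum (fun (_ : Fin (dv - 1)) (j : S) => PS j x)]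
      simp [hS1 x]
    have : ∑ y : Y, W y x
        = (∑ l : L, PL l x) * (∑ s : Fin (dv - 1) → S, ∏ i, PS (s i) x) := by
      rw [Finset.sum_mul_sum, Fintype.sum_prod_type]
      rfl
    rw [this, hL1, hSsum, one_mul]
  have hΦ : ∀ y : Y, Φ y = Real.log (W y 0 / W y 1) := by
    rintro ⟨l, s⟩
    show phiChStar PL l + ∑ i, phiVStar PS (s i)
        = Real.log (varPmf PL PS l s 0 / varPmf PL PS l s 1)
    unfold varPmf phiChStar phiVStar
    have hp0 : (0:ℝ) < ∏ i, PS (s i) 0 := Finset.prod_pos fun i _ => hS _ _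
    have hp1 : (0:ℝ) < ∏ i, PS (s i) 1 := Finset.prod_pos fun i _ => hS _ _
    rw [Real.log_div (mul_pos (hL l 0) hp0).ne' (mul_pos (hL l 1) hp1).ne',
        Real.log_mul (hL l 0).ne' hp0.ne', Real.log_mul (hL l 1).ne' hp1.ne',
        Real.log_prod (fun i _ => (hS _ _).ne'),
        Real.log_prod (fun i _ => (hS _ _).ne'),
        Real.log_div (hL l 0).ne' (hL l 1).ne']
    have h2 : ∑ i, Real.log (PS (s i) 0 / PS (s i) 1)
        = ∑ i, (Real.log (PS (s i) 0) - Real.log (PS (s i) 1)) :=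
      Finset.sum_congr rfl fun i _ => Real.log_div (hS _ _).ne' (hS _ _).ne'
    rw [h2, Finset.sum_sub_distrib]
    ring
  have ratio_le : ∀ y y' : Y, Φ y' ≤ Φ y → W y' 0 * W y 1 ≤ W y 0 * W y' 1 := by
    intro y y' h
    rw [hΦ, hΦ, Real.log_le_log_iff (div_pos (Wpos y' 0) (Wpos y' 1)) (div_pos (Wpos y 0) (Wpos y 1)),
        div_le_div_iff₀ (Wpos y' 1) (Wpos y 1)] at h
    linarith
  have ratio_eq : ∀ y y' : Y, Φ y = Φ y' → W y 0 * W y' 1 = W y' 0 * W y 1 :=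
    fun y y' h => le_antisymm (ratio_le y' y h.le) (ratio_le y y' h.ge)
  have ratio_eq' : ∀ y y' : Y, W y 0 * W y' 1 = W y' 0 * W y 1 → Φ y = Φ y' := by
    intro y y' h
    rw [hΦ, hΦ]
    congr 1
    rw [div_eq_div_iff (Wpos y 1).ne' (Wpos y' 1).ne']
    linarith
  -- enumerate Y in decreasing order of Φ
  let N := Fintype.card Y
  let e0 : Fin N ≃ Y := (Fintype.equivFin Y).symm
  let σ : Equiv.Perm (Fin N) := Tuple.sort (fun i => -Φ (e0 i))
  let e : Fin N ≃ Y := σ.trans e0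
  have he : ∀ i, e i = e0 (σ i) := fun i => rfl
  have hanti : ∀ i j : Fin N, i ≤ j → Φ (e j) ≤ Φ (e i) := by
    intro i j hij
    have := Tuple.monotone_sort (fun i => -Φ (e0 i)) hij
    simp only [Function.comp_apply] at this
    rw [he i, he j]
    linarith
  let W' : Fin N → ZMod 2 → ℝ := fun i => W (e i)
  obtain ⟨Q, hQmono, hQconst, hQopt⟩ :=
    hfact N W' (fun i x => (Wpos (e i) x).le)
      (fun x => by rw [show ∑ y : Fin N, W' y x = ∑ y : Fin N, W (e y) x from rfl,
        Equiv.sum_comp e (fun y => W y x)]; exact Wsum x)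
      (by
        intro i h
        exact ratio_le (e ⟨i, Nat.lt_of_succ_lt h⟩) (e ⟨i + 1, h⟩)
          (hanti ⟨i, Nat.lt_of_succ_lt h⟩ ⟨i + 1, h⟩ (by simp)))
      (by
        intro i j k hij hjk hik
        have h1 : Φ (e i) = Φ (e k) := ratio_eq' _ _ hik
        have h2 : Φ (e i) = Φ (e j) :=
          le_antisymm (h1 ▸ hanti j k hjk) (hanti i j hij)
        exact ratio_eq _ _ h2)
  -- define the threshold quantizer on ℝ
  let Λ : ℝ → Fin M := fun a =>
    if h : ∃ i : Fin N, Φ (e i) = a then Q h.choose else ⟨0, hM⟩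
  have hΛval : ∀ (a : ℝ) (i : Fin N), Φ (e i) = a → Λ a = Q i := by
    intro a i hi
    have hex : ∃ j : Fin N, Φ (e j) = a := ⟨i, hi⟩
    show dite _ _ _ = Q i
    rw [dif_pos hex]
    exact hQconst _ _ (ratio_eq _ _ (by rw [hex.choose_spec, hi]))
  have hΛcomp : ∀ y : Y, Λ (Φ y) = Q (e.symm y) := by
    intro y
    exact hΛval (Φ y) (e.symm y) (by rw [Equiv.apply_symm_apply])
  refine ⟨Λ, ?_, ?_⟩
  · rintro a b ⟨la, sa, ha⟩ ⟨lb, sb, hb⟩ hab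
    have ha' : Φ (e (e.symm (la, sa))) = a := by rw [Equiv.apply_symm_apply]; exact ha
    have hb' : Φ (e (e.symm (lb, sb))) = b := by rw [Equiv.apply_symm_apply]; exact hb
    rw [hΛval a _ ha', hΛval b _ hb']
    apply hQmono
    by_contra hcon
    push_neg at hcon
    have := hanti _ _ hcon.le
    rw [ha', hb'] at this
    linarith
  · intro f
    have h1 : mutualInfo W f = mutualInfo W' (fun i => f (e i)) :=
      (mutualInfo_equiv e W f).symm
    have h2 : mutualInfo W (fun y => Λ (Φ y)) = mutualInfo W' Q := by
      rw [← mutualInfo_equiv e W (fun y => Λ (Φ y))]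
      congr 1
      funext i
      rw [hΛcomp (e i), Equiv.symm_apply_apply]
    calc mutualInfo W f = mutualInfo W' (fun i => f (e i)) := h1
      _ ≤ mutualInfo W' Q := hQopt _
      _ = mutualInfo W (fun y => Λ (Φ y)) := h2.symm
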